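/- Let S, S' ⊆ [0,1]^d be nonempty compact sets and ε ∈ [0,1] such that the Hausdorff distance between S and S' with respect to the ℓ∞ metric is at most ε. Then |HV(S) − HV(S')| ≤ d · ε · (R + ε)^{d−1}. -/

import Mathlib

open MeasureTheory

/-- The dominated region of `S` with respect to the reference point `z`. -/
def dominatedRegion {d : ℕ} (z : Fin d → ℝ) (S : Set (Fin d → ℝ)) : Set (Fin d → ℝ) :=
  {y | ∃ u ∈ S, z ≤ y ∧ y ≤ u}

/-- The dominated hypervolume: Lebesgue measure of the dominated region. -/
noncomputable def HV {d : ℕ} (z : Fin d → ℝ) (S : Set (Fin d → ℝ)) : ℝ :=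
  (volume (dominatedRegion z S)).toReal



-- compactness of dominated region
lemma isCompact_dominatedRegion {d : ℕ} (z : Fin d → ℝ) (hz : ∀ j, z j < 0)
    (S : Set (Fin d → ℝ)) (hSc : IsCompact S) (hS0 : ∀ u ∈ S, ∀ i, 0 ≤ u i) :
    IsCompact (dominatedRegion z S) := by
  have himg : dominatedRegion z S =
      (fun p : (Fin d → ℝ) × (Fin d → ℝ) => fun i => z i + p.2 i * (p.1 i - z i)) ''
        (S ×ˢ Set.Icc 0 1) := by
    ext y
    constructor
    · rintro ⟨u, hu, hzy, hyu⟩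
      refine ⟨⟨u, fun i => (y i - z i) / (u i - z i)⟩, ⟨hu, ?_⟩, ?_⟩
      · constructor
        · intro i
          exact div_nonneg (by linarith [hzy i]) (by linarith [hz i, hS0 u hu i])
        · intro i
          have hden : (0:ℝ) < u i - z i := by linarith [hz i, hS0 u hu i]
          exact div_le_one_of_le₀ (by linarith [hyu i]) hden.le
      · funext i
        have hden : (u i - z i) ≠ 0 := by
          have := hz i; have := hS0 u hu i; intro h; linarith [sub_eq_zero.mp h]
        field_simp
        ring
    · rintro ⟨⟨u, t⟩, ⟨hu, ht0, ht1⟩, rfl⟩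
      refine ⟨u, hu, ?_, ?_⟩
      · intro i
        have : 0 ≤ t i * (u i - z i) :=
          mul_nonneg (ht0 i) (by linarith [hz i, hS0 u hu i])
        simpa using by linarith
      · intro i
        have h1 : t i * (u i - z i) ≤ 1 * (u i - z i) :=
          mul_le_mul_of_nonneg_right (ht1 i) (by linarith [hz i, hS0 u hu i])
        simpa using by linarith [h1]
  rw [himg]
  apply (hSc.prod isCompact_Icc).image
  apply continuous_pi
  intro i
  fun_prop

lemma dominatedRegion_subset_Icc {d : ℕ} (z : Fin d → ℝ) (S : Set (Fin d → ℝ))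
    (c : Fin d → ℝ) (hc : ∀ u ∈ S, u ≤ c) :
    dominatedRegion z S ⊆ Set.Icc z c := by
  rintro y ⟨u, hu, hzy, hyu⟩
  exact ⟨hzy, le_trans hyu (hc u hu)⟩



lemma step_lemma {n : ℕ} (z : Fin (n+1) → ℝ) (hz : ∀ i, z i < 0) (ε : ℝ) (hε : 0 ≤ ε)
    (T : Set (Fin (n+1) → ℝ)) (hT0 : ∀ u ∈ T, ∀ i, 0 ≤ u i)
    (j : Fin (n+1)) (hTj : ∀ u ∈ T, u j ≤ 1) (hT1 : ∀ u ∈ T, ∀ i, u i ≤ 1 + ε)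
    (hA : MeasurableSet (dominatedRegion z T))
    (hB : MeasurableSet (dominatedRegion z ((fun u => u + fun i => if i = j then ε else 0) '' T))) :
    volume (dominatedRegion z ((fun u => u + fun i => if i = j then ε else 0) '' T))
      ≤ volume (dominatedRegion z T)
        + ENNReal.ofReal ε * ∏ i : Fin n, ENNReal.ofReal (1 + ε - z (j.succAbove i)) := by
  classical
  set c : Fin (n+1) → ℝ := fun i => if i = j then ε else 0 with hc
  set A := dominatedRegion z T with hAdef
  set B := dominatedRegion z ((fun u => u + c) '' T) with hBdef
  have hBmem : ∀ y, y ∈ B ↔ ∃ u ∈ T, z ≤ y ∧ y ≤ u + c := by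
    intro y
    constructor
    · rintro ⟨u', ⟨u, hu, rfl⟩, h1, h2⟩; exact ⟨u, hu, h1, h2⟩
    · rintro ⟨u, hu, h1, h2⟩; exact ⟨u + c, ⟨u, hu, rfl⟩, h1, h2⟩
  have hBsub : volume B ≤ volume A + volume (B \ A) := by
    calc volume B ≤ volume (A ∪ (B \ A)) := measure_mono (by
          intro x hx
          by_cases h : x ∈ A
          · exact Or.inl h
          · exact Or.inr ⟨hx, h⟩)
    _ ≤ volume A + volume (B \ A) := measure_union_le _ _
  refine le_trans hBsub (add_le_add_right ?_ _)
  set E := B \ A with hEdef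
  have hEm : MeasurableSet E := hB.diff hA
  set e := MeasurableEquiv.piFinSuccAbove (fun _ : Fin (n+1) => ℝ) j with he
  have hmp := measurePreserving_piFinSuccAbove (fun _ : Fin (n+1) => (volume : Measure ℝ)) j
  have hsymm : ∀ (t : ℝ) (w : Fin n → ℝ), e.symm (t, w) = j.insertNth t w := fun _ _ => rfl
  have hEm' : MeasurableSet (e.symm ⁻¹' E) := e.symm.measurable hEm
  have hvol : volume E = ((volume : Measure ℝ).prod
      (Measure.pi fun _ : Fin n => (volume : Measure ℝ))) (e.symm ⁻¹' E) := by
    rw [volume_pi, ← hmp.measure_preimage hEm'.nullMeasurableSet]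
    congr 1
    rw [← Set.preimage_comp]
    have : ⇑e.symm ∘ ⇑e = id := by funext x; exact e.symm_apply_apply x
    rw [this, Set.preimage_id]
  rw [hvol, Measure.prod_apply_symm hEm']
  set Box : Set (Fin n → ℝ) := Set.Icc (fun i => z (j.succAbove i)) (fun _ => 1 + ε) with hBox
  have key : ∀ w : Fin n → ℝ,
      volume ((fun t => (t, w)) ⁻¹' (e.symm ⁻¹' E))
        ≤ Box.indicator (fun _ => ENNReal.ofReal ε) w := by
    intro w
    have hsec : (fun t => (t, w)) ⁻¹' (e.symm ⁻¹' E) = {t | j.insertNth t w ∈ E} := by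
      ext t; simp only [Set.mem_preimage, hsymm]; rfl
    rw [hsec]
    rcases Set.eq_empty_or_nonempty {t | j.insertNth t w ∈ E} with hemp | ⟨t₀, ht₀⟩
    · simp [hemp]
    · set Aw : Set ℝ := {t | j.insertNth t w ∈ A} with hAw
      -- helper to produce elements of Aw
      have hmemAw : ∀ t u, u ∈ T → z ≤ j.insertNth t w → j.insertNth t w ≤ u + c → u j ∈ Aw := by
        intro t u hu hzy hyu
        rw [Fin.le_insertNth_iff] at hzy
        rw [Fin.insertNth_le_iff] at hyu
        refine ⟨u, hu, ?_, ?_⟩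
        · rw [Fin.le_insertNth_iff]
          refine ⟨le_of_lt (lt_of_lt_of_le (hz j) (hT0 u hu j)), hzy.2⟩
        · rw [Fin.insertNth_le_iff]
          refine ⟨le_refl _, ?_⟩
          intro i
          have := hyu.2 i
          simpa [hc, Fin.succAbove_ne] using this
      -- basic data from t₀
      obtain ⟨hB₀, hA₀⟩ := ht₀
      obtain ⟨u₀, hu₀, hz₀, hle₀⟩ := (hBmem _).mp hB₀
      have hwBox : w ∈ Box := by
        rw [Fin.le_insertNth_iff] at hz₀
        rw [Fin.insertNth_le_iff] at hle₀
        constructor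
        · exact hz₀.2
        · intro i
          have h1 : w i ≤ u₀ (j.succAbove i) := by
            have := hle₀.2 i
            simpa [hc, Fin.succAbove_ne] using this
          exact le_trans h1 (hT1 u₀ hu₀ _)
      rw [Set.indicator_of_mem hwBox]
      have hAwne : Aw.Nonempty := ⟨u₀ j, hmemAw t₀ u₀ hu₀ hz₀ hle₀⟩
      have hbdd : BddAbove Aw := by
        refine ⟨1, ?_⟩
        rintro s ⟨u', hu', _, hsu⟩
        rw [Fin.insertNth_le_iff] at hsu
        exact le_trans hsu.1 (hTj u' hu')
      set M : ℝ := sSup Aw with hM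
      have hsub2 : {t | j.insertNth t w ∈ E} ⊆ Set.Icc M (M + ε) := by
        rintro t ⟨htB, htA⟩
        obtain ⟨u, hu, hzy, hyu⟩ := (hBmem _).mp htB
        have hujAw : u j ∈ Aw := hmemAw t u hu hzy hyu
        constructor
        · by_contra h
          push_neg at h
          obtain ⟨s, hs, hts⟩ := exists_lt_of_lt_csSup hAwne h
          obtain ⟨u'', hu'', hzs, hsu⟩ := hs
          rw [Fin.insertNth_le_iff] at hsu
          apply htA
          refine ⟨u'', hu'', hzy, ?_⟩
          rw [Fin.insertNth_le_iff]
          exact ⟨le_trans hts.le hsu.1, hsu.2⟩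
        · have h1 : t ≤ u j + ε := by
            have := (Fin.insertNth_le_iff.mp hyu).1
            simpa [hc] using this
          exact le_trans h1 (add_le_add_left (le_csSup hbdd hujAw) ε)
      calc volume {t | j.insertNth t w ∈ E} ≤ volume (Set.Icc M (M + ε)) :=
            measure_mono hsub2
        _ = ENNReal.ofReal ε := by rw [Real.volume_Icc]; ring_nf
  calc (∫⁻ w, volume ((fun t => (t, w)) ⁻¹' (e.symm ⁻¹' E)) ∂(Measure.pi fun _ : Fin n => (volume : Measure ℝ)))
      ≤ ∫⁻ w, Box.indicator (fun _ => ENNReal.ofReal ε) w ∂(Measure.pi fun _ : Fin n => (volume : Measure ℝ)) :=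
        lintegral_mono key
    _ = ENNReal.ofReal ε * volume Box := by
        rw [lintegral_indicator measurableSet_Icc, setLIntegral_const, ← volume_pi]
    _ = ENNReal.ofReal ε * ∏ i : Fin n, ENNReal.ofReal (1 + ε - z (j.succAbove i)) := by
        rw [Real.volume_Icc_pi]

-- one-sided estimate
lemma one_sided {n : ℕ} (z : Fin (n+1) → ℝ) (hz : ∀ j, z j < 0)
    (S S' : Set (Fin (n+1) → ℝ)) (hS : S.Nonempty) (hS' : S'.Nonempty)
    (hSc : IsCompact S) (hS'c : IsCompact S')
    (hSsub : S ⊆ Set.Icc 0 1) (hS'sub : S' ⊆ Set.Icc 0 1)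
    (ε : ℝ) (hε0 : 0 ≤ ε)
    (hdist : Metric.hausdorffDist S S' ≤ ε) :
    HV z S - HV z S' ≤ ((n:ℝ)+1) * ε * ((⨆ j, (1 - z j)) + ε) ^ n := by
  classical
  set R : ℝ := ⨆ j, (1 - z j) with hRdef
  have hRb : ∀ i, 1 - z i ≤ R := fun i =>
    le_ciSup (f := fun j => 1 - z j) (Set.Finite.bddAbove (Set.finite_range _)) i
  have hR1 : (1:ℝ) ≤ R := le_trans (by linarith [hz 0]) (hRb 0)
  set v : ℕ → Fin (n+1) → ℝ := fun k i => if (i:ℕ) < k then ε else 0 with hv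
  set Tk : ℕ → Set (Fin (n+1) → ℝ) := fun k => (fun u => u + v k) '' S' with hTk
  have hTk0 : ∀ k, ∀ u ∈ Tk k, ∀ i, 0 ≤ u i := by
    rintro k u ⟨u', hu', rfl⟩ i
    have := (hS'sub hu').1 i
    have : (0:ℝ) ≤ u' i := by simpa using this
    have hvk : 0 ≤ v k i := by by_cases h : (i:ℕ) < k <;> simp [hv, h, hε0]
    simp only [Pi.add_apply]; linarith
  have hTk1 : ∀ k, ∀ u ∈ Tk k, ∀ i, u i ≤ 1 + ε := by
    rintro k u ⟨u', hu', rfl⟩ i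
    have h1 : u' i ≤ 1 := by simpa using (hS'sub hu').2 i
    have hvk : v k i ≤ ε := by by_cases h : (i:ℕ) < k <;> simp [hv, h, hε0]
    simp only [Pi.add_apply]; linarith
  have hTkc : ∀ k, IsCompact (Tk k) := fun k =>
    hS'c.image (continuous_id.add continuous_const)
  have hDmeas : ∀ k, MeasurableSet (dominatedRegion z (Tk k)) := fun k =>
    ((isCompact_dominatedRegion z hz _ (hTkc k) (hTk0 k)).isClosed).measurableSet
  set C : ENNReal := ENNReal.ofReal ε * (ENNReal.ofReal (R + ε)) ^ n with hC
  have hstep : ∀ k : ℕ, k < n + 1 →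
      volume (dominatedRegion z (Tk (k+1))) ≤ volume (dominatedRegion z (Tk k)) + C := by
    intro k hk
    set j : Fin (n+1) := ⟨k, hk⟩ with hj
    have himg : (fun u => u + fun i => if i = j then ε else 0) '' Tk k = Tk (k+1) := by
      rw [hTk, Set.image_image]
      apply Set.image_congr'
      intro u
      rw [add_assoc]
      congr 1
      funext i
      simp only [Pi.add_apply, hv]
      have hij : (i = j) ↔ ((i:ℕ) = k) := by
        constructor
        · rintro rfl; rfl
        · intro h; exact Fin.ext h
      by_cases h1 : (i:ℕ) < k
      · have h2 : (i:ℕ) < k + 1 := by omega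
        have h3 : ¬ (i = j) := by rw [hij]; omega
        simp [h1, h2, h3]
      · by_cases h4 : (i:ℕ) = k
        · have h2 : (i:ℕ) < k + 1 := by omega
          simp [h1, h2, hij.mpr h4, hj]
        · have h2 : ¬ ((i:ℕ) < k + 1) := by omega
          have h3 : ¬ (i = j) := by rw [hij]; omega
          simp [h1, h2, h3]
    have hTj : ∀ u ∈ Tk k, u j ≤ 1 := by
      rintro u ⟨u', hu', rfl⟩
      have h1 : u' j ≤ 1 := by simpa using (hS'sub hu').2 j
      have h2 : v k j = 0 := by simp [hv, hj]
      simp only [Pi.add_apply, h2]; linarith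
    have := step_lemma z hz ε hε0 (Tk k) (hTk0 k) j hTj (hTk1 k) (hDmeas k)
      (by rw [himg]; exact hDmeas (k+1))
    rw [himg] at this
    refine le_trans this (add_le_add_right ?_ _)
    rw [hC]
    refine mul_le_mul_right ?_ _
    calc (∏ i : Fin n, ENNReal.ofReal (1 + ε - z (j.succAbove i)))
        ≤ ∏ _i : Fin n, ENNReal.ofReal (R + ε) := by
          refine Finset.prod_le_prod' fun i _ => ENNReal.ofReal_le_ofReal ?_
          have := hRb (j.succAbove i); linarith
      _ = (ENNReal.ofReal (R + ε)) ^ n := by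
          rw [Finset.prod_const, Finset.card_univ, Fintype.card_fin]
  have hT0eq : Tk 0 = S' := by
    have : v 0 = 0 := by funext i; simp [hv]
    simp [hTk, this]
  have hchain : ∀ k : ℕ, k ≤ n + 1 →
      volume (dominatedRegion z (Tk k)) ≤ volume (dominatedRegion z S') + k * C := by
    intro k
    induction k with
    | zero => intro _; simp [hT0eq]
    | succ m ih =>
      intro hm
      have h1 := hstep m (by omega)
      have h2 := ih (by omega)
      calc volume (dominatedRegion z (Tk (m+1)))
          ≤ volume (dominatedRegion z (Tk m)) + C := h1
        _ ≤ (volume (dominatedRegion z S') + m * C) + C := add_le_add_left h2 _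
        _ = volume (dominatedRegion z S') + ((m+1 : ℕ) : ENNReal) * C := by
            push_cast
            rw [add_one_mul, ← add_assoc]
  -- inclusion D(S) ⊆ D(Tk (n+1))
  have hedist : EMetric.hausdorffEdist S S' ≠ ⊤ :=
    Metric.hausdorffEdist_ne_top_of_nonempty_of_bounded hS hS' hSc.isBounded hS'c.isBounded
  have hincl : dominatedRegion z S ⊆ dominatedRegion z (Tk (n+1)) := by
    rintro y ⟨u, hu, hzy, hyu⟩
    have h1 : Metric.infDist u S' ≤ ε :=
      le_trans (Metric.infDist_le_hausdorffDist_of_mem hu hedist) hdist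
    obtain ⟨u', hu', hdu⟩ := hS'c.exists_infDist_eq_dist hS' u
    rw [hdu] at h1
    refine ⟨u' + v (n+1), ⟨u', hu', rfl⟩, hzy, ?_⟩
    intro i
    have h2 : dist (u i) (u' i) ≤ dist u u' := dist_le_pi_dist u u' i
    have h3 : u i - u' i ≤ ε := by
      have := abs_sub_le_iff.mp (le_trans h2 h1 : |u i - u' i| ≤ ε)
      exact this.1
    have h4 : v (n+1) i = ε := by simp [hv, i.isLt]
    simp only [Pi.add_apply, h4]
    linarith [hyu i]
  have hmain : volume (dominatedRegion z S)
      ≤ volume (dominatedRegion z S') + (n+1) * C := by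
    refine le_trans (measure_mono hincl) ?_
    exact_mod_cast hchain (n+1) le_rfl
  -- finiteness
  have hfin : volume (dominatedRegion z S') ≠ ⊤ := by
    refine ne_top_of_le_ne_top ?_ (measure_mono (dominatedRegion_subset_Icc z S' 1
      (fun u hu => (hS'sub hu).2)))
    rw [Real.volume_Icc_pi]
    exact (ENNReal.prod_lt_top (fun i _ => ENNReal.ofReal_lt_top)).ne
  set K : ℝ := ((n:ℝ)+1) * ε * (R + ε) ^ n with hK
  have hK0 : 0 ≤ K := by
    apply mul_nonneg (mul_nonneg (by positivity) hε0)
    positivity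
  have hCK : ((n:ℕ)+1 : ENNReal) * C = ENNReal.ofReal K := by
    rw [hC, hK, ENNReal.ofReal_mul (by positivity), ENNReal.ofReal_mul (by positivity),
      ENNReal.ofReal_pow (by linarith)]
    rw [show ((n:ℝ)+1) = ((n+1 : ℕ) : ℝ) by push_cast; ring, ENNReal.ofReal_natCast]
    push_cast
    ring
  have hfinal : HV z S ≤ HV z S' + K := by
    have h5 : volume (dominatedRegion z S) ≤ volume (dominatedRegion z S')
        + ENNReal.ofReal K := by
      rw [← hCK]
      exact_mod_cast hmain
    have h6 : volume (dominatedRegion z S') + ENNReal.ofReal K ≠ ⊤ := by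
      exact ENNReal.add_ne_top.mpr ⟨hfin, ENNReal.ofReal_ne_top⟩
    have h7 := ENNReal.toReal_mono h6 h5
    rwa [ENNReal.toReal_add hfin ENNReal.ofReal_ne_top,
      ENNReal.toReal_ofReal hK0] at h7
  linarith


/-- Hypervolume stability: dominated hypervolume is Lipschitz w.r.t. Hausdorff distance
(the metric on `Fin d → ℝ` is the ℓ∞ metric), with `R = max_j (1 - z_j)`. -/
theorem hv_hausdorff_stability {d : ℕ} (hd : 1 ≤ d) (z : Fin d → ℝ) (hz : ∀ j, z j < 0)
    (S S' : Set (Fin d → ℝ)) (hS : S.Nonempty) (hS' : S'.Nonempty)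
    (hSc : IsCompact S) (hS'c : IsCompact S')
    (hSsub : S ⊆ Set.Icc 0 1) (hS'sub : S' ⊆ Set.Icc 0 1)
    (ε : ℝ) (hε0 : 0 ≤ ε) (hε1 : ε ≤ 1)
    (hdist : Metric.hausdorffDist S S' ≤ ε) :
    |HV z S - HV z S'| ≤ (d : ℝ) * ε * ((⨆ j, (1 - z j)) + ε) ^ (d - 1) := by
  obtain ⟨n, rfl⟩ : ∃ n, d = n + 1 := ⟨d - 1, (Nat.succ_pred_eq_of_pos hd).symm⟩
  have hcast : ((n + 1 : ℕ) : ℝ) = (n : ℝ) + 1 := by push_cast; ring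
  rw [Nat.add_sub_cancel, abs_sub_le_iff, hcast]
  constructor
  · exact one_sided z hz S S' hS hS' hSc hS'c hSsub hS'sub ε hε0 hdist
  · exact one_sided z hz S' S hS' hS hS'c hSc hS'sub hSsub ε hε0
      (by rwa [Metric.hausdorffDist_comm])
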